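/- Fix an integer h ≥ 2. There exists N such that for every integer n ≥ N and every integer s with 1 ≤ s ≤ n/2, the quantity m = 2 · ∑_{i=1}^{min(h−1,s)} C(s,i) · C(n−s, h−i) satisfies m ≥ 2 s (1 − s/n)^{h−1} · C(n−1, h−1), where C(·,·) denotes the binomial coefficient. -/

import Mathlib

open Finset
set_option maxHeartbeats 1000000

private lemma cast_choose_prod {m k : ℕ} (hkm : k ≤ m) :
    ((m.choose k : ℕ) : ℝ) * (k.factorial : ℕ) = ∏ j ∈ range k, ((m:ℝ) - j) := by
  have h := Nat.descFactorial_eq_factorial_mul_choose m k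
  have h2 : ((m.descFactorial k : ℕ) : ℝ) = ∏ j ∈ range k, ((m:ℝ) - j) := by
    rw [Nat.descFactorial_eq_prod_range, Nat.cast_prod]
    apply Finset.prod_congr rfl
    intro j hj
    have : j ≤ m := le_trans (le_of_lt (mem_range.mp hj)) hkm
    rw [Nat.cast_sub this]
  rw [← h2, h]
  push_cast
  ring


private lemma easy_branch {p s a n : ℕ} (hn : n = a + s) (hs : 1 ≤ s)
    (hsa : (p-1)*s ≤ a) (hpa : p ≤ a) :
    ((a:ℝ)/n)^p * ∏ j ∈ range p, ((n:ℝ)-1-j) ≤ ∏ j ∈ range p, ((a:ℝ)-j) := by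
  have hns : (n:ℝ) = a + s := by rw [hn]; push_cast; ring
  have hn0 : (0:ℝ) < n := by
    have : 1 ≤ n := by omega
    exact_mod_cast Nat.lt_of_lt_of_le Nat.zero_lt_one this
  have hrw : ((a:ℝ)/n)^p = ∏ _j ∈ range p, ((a:ℝ)/n) := by rw [Finset.prod_const, Finset.card_range]
  rw [hrw, ← Finset.prod_mul_distrib]
  apply Finset.prod_le_prod
  · intro j hj
    have hj' : j < p := mem_range.mp hj
    have h1 : (j:ℝ) ≤ (n:ℝ) - 1 := by
      have : j + 1 ≤ n := by omega
      have := (Nat.cast_le (α := ℝ)).mpr this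
      push_cast at this; linarith
    have ha0 : (0:ℝ) ≤ (a:ℝ)/n := by positivity
    nlinarith
  · intro j hj
    have hj' : j < p := mem_range.mp hj
    have hjs : (j:ℝ)*s ≤ (a:ℝ) := by
      have h1 : j * s ≤ a := le_trans (Nat.mul_le_mul_right s (by omega : j ≤ p - 1)) hsa
      exact_mod_cast h1
    rw [div_mul_eq_mul_div, div_le_iff₀ hn0]
    nlinarith [hjs, hns]


private lemma pow_one_add_le {u : ℝ} (hu : 0 ≤ u) :
    ∀ m : ℕ, 2 * m * u ≤ 1 → (1 + u) ^ m ≤ 1 + 2 * m * u := by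
  intro m
  induction m with
  | zero => simp
  | succ m ih =>
    intro hm
    have hcast : ((m+1 : ℕ) : ℝ) = (m : ℝ) + 1 := by push_cast; ring
    rw [hcast] at hm ⊢
    have hmu : 2 * (m:ℝ) * u ≤ 1 := by nlinarith
    have h1 := ih hmu
    calc (1+u)^(m+1) = (1+u)^m * (1+u) := by ring
      _ ≤ (1 + 2*m*u) * (1+u) := by
          apply mul_le_mul_of_nonneg_right h1 (by linarith)
      _ ≤ 1 + 2*((m:ℝ)+1)*u := by nlinarith

private lemma hard_branch {p s a n : ℕ} (hn : n = a + s) (hs2 : 2 ≤ s) (hp : 1 ≤ p)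
    (h2s : 2*s ≤ n) (hN : 20*(p+1)^2 ≤ n) :
    ((a:ℝ)/n)^p * ∏ j ∈ range p, ((n:ℝ)-1-j) ≤
      ∏ j ∈ range p, ((a:ℝ)-j) + ((s:ℝ)-1)/2 * p * ∏ j ∈ range (p-1), ((a:ℝ)-j) := by
  obtain ⟨q, rfl⟩ : ∃ q, p = q+1 := ⟨p-1, by omega⟩
  have hq1 : (q:ℝ) + 1 = ((q+1 : ℕ) : ℝ) := by push_cast; ring
  have hns : (n:ℝ) = a + s := by rw [hn]; push_cast; ring
  have h2sr : 2*(s:ℝ) ≤ n := by exact_mod_cast h2s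
  have hs2r : (2:ℝ) ≤ s := by exact_mod_cast hs2
  have hq0 : (0:ℝ) ≤ q := Nat.cast_nonneg q
  have hNr : 20*((q:ℝ)+2)^2 ≤ n := by
    have : ((20*(q+1+1)^2 : ℕ) : ℝ) ≤ n := by exact_mod_cast hN
    push_cast at this; nlinarith [this]
  have hn0 : (0:ℝ) < n := by nlinarith
  have h2a : (n:ℝ) ≤ 2*a := by linarith
  have h4ap : (n:ℝ) ≤ 4*((a:ℝ)-(q+1)) := by nlinarith
  have hap0 : (0:ℝ) < (a:ℝ)-(q+1) := by nlinarith
  have hap1 : (1:ℝ) ≤ (a:ℝ)-(q+1) := by nlinarith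
  set u : ℝ := ((q:ℝ)+1)*s/((n:ℝ)*((a:ℝ)-(q+1))) with hu
  have hu0 : 0 ≤ u := by positivity
  have hpos : (0:ℝ) < (n:ℝ)*((a:ℝ)-(q+1)) := by positivity
  have hun : u * ((n:ℝ)*((a:ℝ)-(q+1))) = ((q:ℝ)+1)*s := by
    rw [hu, div_mul_cancel₀ _ hpos.ne']
  -- Step 1: termwise bound
  have hstep1 : ((a:ℝ)/n)^(q+1) * ∏ j ∈ range (q+1), ((n:ℝ)-1-j) ≤
      ∏ j ∈ range (q+1), (((a:ℝ)-j)*(1+u)) := by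
    have hrw : ((a:ℝ)/n)^(q+1) = ∏ _j ∈ range (q+1), ((a:ℝ)/n) := by rw [Finset.prod_const, Finset.card_range]
    rw [hrw, ← Finset.prod_mul_distrib]
    apply Finset.prod_le_prod
    · intro j hj
      have hj' : j < q+1 := Finset.mem_range.mp hj
      have hjr : (j:ℝ) ≤ (q:ℝ) := by exact_mod_cast Nat.lt_succ_iff.mp hj'
      have h1 : (j:ℝ) ≤ (n:ℝ) - 1 := by nlinarith
      have ha0 : (0:ℝ) ≤ (a:ℝ)/n := by positivity
      exact mul_nonneg ha0 (by linarith)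
    · intro j hj
      have hj' : j < q+1 := Finset.mem_range.mp hj
      have hjr : (j:ℝ) ≤ (q:ℝ)+1 := by
        have : (j:ℝ) ≤ (q:ℝ) := by exact_mod_cast Nat.lt_succ_iff.mp hj'
        linarith
      rw [div_mul_eq_mul_div, div_le_iff₀ hn0]
      have hid : (a:ℝ)*((n:ℝ)-1-j) = ((a:ℝ)-j)*n + ((j:ℝ)*s - a) := by rw [hns]; ring
      have hjs : (j:ℝ)*s ≤ ((q:ℝ)+1)*s := by nlinarith
      have h3 : ((q:ℝ)+1)*s ≤ ((a:ℝ)-j)*(u*n) := by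
        have h4 : u*n*((a:ℝ)-(q+1)) ≤ u*n*((a:ℝ)-j) := by
          apply mul_le_mul_of_nonneg_left (by linarith) (by positivity)
        calc ((q:ℝ)+1)*s = u*n*((a:ℝ)-(q+1)) := by linear_combination -hun
          _ ≤ u*n*((a:ℝ)-j) := h4
          _ = ((a:ℝ)-j)*(u*n) := by ring
      have ha0 : (0:ℝ) ≤ (a:ℝ) := Nat.cast_nonneg a
      nlinarith [hid, hjs, h3]
  -- nonnegativity of factors
  have hfac : ∀ j ∈ range (q+1), (0:ℝ) ≤ (a:ℝ)-j := by
    intro j hj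
    have hj' : j < q+1 := Finset.mem_range.mp hj
    have : (j:ℝ) ≤ (q:ℝ) := by exact_mod_cast Nat.lt_succ_iff.mp hj'
    linarith
  have hP0 : (0:ℝ) ≤ ∏ j ∈ range (q+1), ((a:ℝ)-j) := Finset.prod_nonneg hfac
  have hQ0 : (0:ℝ) ≤ ∏ j ∈ range q, ((a:ℝ)-j) := by
    apply Finset.prod_nonneg
    intro j hj
    exact hfac j (Finset.mem_range.mpr (Nat.lt_succ_of_lt (Finset.mem_range.mp hj)))
  have hstep2 : ∏ j ∈ range (q+1), (((a:ℝ)-j)*(1+u)) =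
      (∏ j ∈ range (q+1), ((a:ℝ)-j)) * (1+u)^(q+1) := by
    rw [Finset.prod_mul_distrib]
    simp
  -- Step 3: 2(q+1)u ≤ 1
  have h4p : 4*((q:ℝ)+1)^2 ≤ n := by nlinarith
  have h2pu : 2*((q:ℝ)+1)*u ≤ 1 := by
    rw [← mul_le_mul_iff_of_pos_right hpos]
    have hlhs : 2*((q:ℝ)+1)*u * ((n:ℝ)*((a:ℝ)-(q+1))) = 2*((q:ℝ)+1)*(((q:ℝ)+1)*s) := by
      rw [mul_assoc, hun]
    rw [hlhs, one_mul]
    have e1 : (n:ℝ)*n ≤ n*(4*((a:ℝ)-(q+1))) := by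
      apply mul_le_mul_of_nonneg_left h4ap hn0.le
    have e2 : (4*((q:ℝ)+1)^2)*(2*s) ≤ n*n := by
      apply mul_le_mul h4p h2sr (by positivity) hn0.le
    nlinarith [e1, e2]
  have hpow : (1+u)^(q+1) ≤ 1 + 2*((q+1:ℕ):ℝ)*u := pow_one_add_le hu0 (q+1) (by rw [← hq1]; exact h2pu)
  rw [← hq1] at hpow
  -- Step 5: extra-term bound
  have hkey : 2*u*((a:ℝ)-q) ≤ ((s:ℝ)-1)/2 := by
    rw [← mul_le_mul_iff_of_pos_right hpos]
    have hlhs : 2*u*((a:ℝ)-q) * ((n:ℝ)*((a:ℝ)-(q+1))) =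
        2*((a:ℝ)-q)*(u * ((n:ℝ)*((a:ℝ)-(q+1)))) := by ring
    rw [hlhs, hun]
    have hp16 : 16*((q:ℝ)+1) ≤ n := by nlinarith
    have f1 : (16*((q:ℝ)+1))*s ≤ (n:ℝ)*s := by
      apply mul_le_mul_of_nonneg_right hp16 (by positivity)
    have f2 : (n:ℝ)*s ≤ (n:ℝ)*(2*((s:ℝ)-1)) := by
      apply mul_le_mul_of_nonneg_left (by linarith) hn0.le
    have f3 : 8*((q:ℝ)+1)*s ≤ (n:ℝ)*((s:ℝ)-1) := by linarith
    have g1 : 8*((q:ℝ)+1)*s*((a:ℝ)-(q+1)) ≤ (n:ℝ)*((s:ℝ)-1)*((a:ℝ)-(q+1)) :=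
      mul_le_mul_of_nonneg_right f3 hap0.le
    have hps0 : (0:ℝ) ≤ ((q:ℝ)+1)*s := by positivity
    have g2 : 2*(((q:ℝ)+1)*s) ≤ 2*(((q:ℝ)+1)*s)*((a:ℝ)-(q+1)) := by nlinarith
    nlinarith [g1, g2]
  have hsplit : ∏ j ∈ range (q+1), ((a:ℝ)-j) = (∏ j ∈ range q, ((a:ℝ)-j)) * ((a:ℝ)-q) := by
    rw [Finset.prod_range_succ]
  have hextra : 2*((q:ℝ)+1)*u * ∏ j ∈ range (q+1), ((a:ℝ)-j) ≤
      ((s:ℝ)-1)/2 * ((q:ℝ)+1) * ∏ j ∈ range q, ((a:ℝ)-j) := by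
    rw [hsplit]
    have hpQ0 : (0:ℝ) ≤ ((q:ℝ)+1) * ∏ j ∈ range q, ((a:ℝ)-j) := by positivity
    have := mul_le_mul_of_nonneg_left hkey hpQ0
    nlinarith [this]
  have hlast : ((q+1:ℕ)-1) = q := by omega
  rw [hlast]
  calc ((a:ℝ)/n)^(q+1) * ∏ j ∈ range (q+1), ((n:ℝ)-1-j)
      ≤ ∏ j ∈ range (q+1), (((a:ℝ)-j)*(1+u)) := hstep1
    _ = (∏ j ∈ range (q+1), ((a:ℝ)-j)) * (1+u)^(q+1) := hstep2
    _ ≤ (∏ j ∈ range (q+1), ((a:ℝ)-j)) * (1 + 2*((q:ℝ)+1)*u) := by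
        apply mul_le_mul_of_nonneg_left hpow hP0
    _ = (∏ j ∈ range (q+1), ((a:ℝ)-j)) + 2*((q:ℝ)+1)*u * ∏ j ∈ range (q+1), ((a:ℝ)-j) := by ring
    _ ≤ (∏ j ∈ range (q+1), ((a:ℝ)-j)) + ((s:ℝ)-1)/2 * ((q:ℝ)+1) * ∏ j ∈ range q, ((a:ℝ)-j) := by
        linarith [hextra]
    _ = (∏ j ∈ range (q+1), ((a:ℝ)-j)) + ((s:ℝ)-1)/2 * ((q+1:ℕ):ℝ) * ∏ j ∈ range q, ((a:ℝ)-j) := by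
        rw [← hq1]


/-- For every integer `h ≥ 2` there exists `N` such that for all `n ≥ N` and all integers
`s` with `1 ≤ s ≤ n/2`, the quantity `m = 2 ∑_{i=1}^{min(h−1,s)} C(s,i) C(n−s,h−i)`
satisfies `m ≥ 2 s (1 − s/n)^{h−1} C(n−1,h−1)`. -/
theorem stmt3 (h : ℕ) (hh : 2 ≤ h) :
    ∃ N : ℕ, ∀ n : ℕ, N ≤ n → ∀ s : ℕ, 1 ≤ s → 2 * s ≤ n →
      ((2 * ∑ i ∈ Finset.Icc 1 (min (h - 1) s), (s.choose i) * ((n - s).choose (h - i)) : ℕ) : ℝ)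
        ≥ 2 * (s : ℝ) * (1 - (s : ℝ) / (n : ℝ)) ^ (h - 1) * ((n - 1).choose (h - 1) : ℝ) := by
  refine ⟨20*h^2, ?_⟩
  intro n hn s hs1 h2s
  set p := h - 1 with hpdef
  have hp1 : 1 ≤ p := by omega
  set a := n - s with hadef
  have hna : n = a + s := by omega
  have hN20 : 20*(p+1)^2 ≤ n := by
    have hph : p + 1 = h := by omega
    rw [hph]; exact hn
  have h60 : 60*p + 20 ≤ n := by nlinarith [hN20]
  have hpa : p ≤ a := by omega
  have hn0 : (0:ℝ) < n := by
    have : 0 < n := by omega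
    exact_mod_cast this
  have hcasta : ((a:ℕ):ℝ) = (n:ℝ) - s := by
    rw [hadef]; push_cast [Nat.cast_sub (by omega : s ≤ n)]; ring
  have hone : (1:ℝ) - (s:ℝ)/n = (a:ℝ)/n := by
    rw [hcasta]; field_simp
  have hpn1 : p ≤ n - 1 := by omega
  have hcn1 : (((n-1).choose p : ℕ):ℝ) * (p.factorial:ℕ) = ∏ j ∈ range p, ((n:ℝ)-1-j) := by
    have hc := cast_choose_prod (m := n-1) hpn1
    have hc2 : ((n-1:ℕ):ℝ) = (n:ℝ) - 1 := by
      push_cast [Nat.cast_sub (by omega : 1 ≤ n)]; ring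
    rw [hc]
    apply Finset.prod_congr rfl
    intro j _
    rw [hc2]
  have hca : ((a.choose p : ℕ):ℝ) * (p.factorial:ℕ) = ∏ j ∈ range p, ((a:ℝ)-j) :=
    cast_choose_prod hpa
  have hca1 : ((a.choose (p-1) : ℕ):ℝ) * ((p-1).factorial:ℕ) = ∏ j ∈ range (p-1), ((a:ℝ)-j) :=
    cast_choose_prod (by omega)
  have hfact0 : (0:ℝ) < ((p.factorial:ℕ):ℝ) := by exact_mod_cast p.factorial_pos
  rw [ge_iff_le, hone]
  rcases le_or_gt ((p-1)*s) a with hEasy | hHard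
  · -- easy branch
    have hAn := easy_branch hna hs1 hEasy hpa
    have hAn2 : ((a:ℝ)/n)^p * (((n-1).choose p:ℕ):ℝ) ≤ ((a.choose p:ℕ):ℝ) := by
      rw [← mul_le_mul_iff_of_pos_right hfact0]
      calc ((a:ℝ)/n)^p * (((n-1).choose p:ℕ):ℝ) * ((p.factorial:ℕ):ℝ)
          = ((a:ℝ)/n)^p * ((((n-1).choose p:ℕ):ℝ) * ((p.factorial:ℕ):ℝ)) := by ring
        _ = ((a:ℝ)/n)^p * ∏ j ∈ range p, ((n:ℝ)-1-j) := by rw [hcn1]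
        _ ≤ ∏ j ∈ range p, ((a:ℝ)-j) := hAn
        _ = ((a.choose p:ℕ):ℝ) * ((p.factorial:ℕ):ℝ) := hca.symm
    have hsum : s * a.choose p ≤ ∑ i ∈ Icc 1 (min p s), s.choose i * (a.choose (h-i)) := by
      have hmem : 1 ∈ Icc 1 (min p s) := by simp; omega
      have hle := Finset.single_le_sum (f := fun i => s.choose i * (a.choose (h-i)))
        (fun i _ => Nat.zero_le _) hmem
      simp only [Nat.choose_one_right] at hle
      exact hle
    have hnat : 2*(s * a.choose p) ≤ 2 * ∑ i ∈ Icc 1 (min p s), s.choose i * (a.choose (h-i)) :=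
      Nat.mul_le_mul_left 2 hsum
    have hreal : ((2*(s * a.choose p):ℕ):ℝ) ≤
        ((2 * ∑ i ∈ Icc 1 (min p s), s.choose i * (a.choose (h-i)):ℕ):ℝ) := by
      exact_mod_cast hnat
    have hstep : 2*(s:ℝ)*((a:ℝ)/n)^p*(((n-1).choose p:ℕ):ℝ) ≤ ((2*(s * a.choose p):ℕ):ℝ) := by
      push_cast
      have hs0 : (0:ℝ) ≤ 2*(s:ℝ) := by positivity
      nlinarith [mul_le_mul_of_nonneg_left hAn2 hs0]
    linarith [hstep, hreal]
  · -- hard branch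
    have hs2 : 2 ≤ s := by
      rcases Nat.lt_or_ge s 2 with hc | hc
      · exfalso
        have hs1' : s = 1 := by omega
        rw [hs1'] at hHard
        omega
      · exact hc
    have hp2 : 2 ≤ p := by
      rcases Nat.lt_or_ge p 2 with hc | hc
      · exfalso
        have hp1' : p = 1 := by omega
        rw [hp1'] at hHard
        omega
      · exact hc
    have hAn := hard_branch hna hs2 hp1 h2s hN20
    have hfacsplit : ((p.factorial:ℕ):ℝ) = (p:ℝ) * (((p-1).factorial:ℕ):ℝ) := by
      have hnat2 : p.factorial = p * (p-1).factorial := by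
        conv_lhs => rw [show p = (p-1)+1 by omega]
        rw [Nat.factorial_succ]
        congr 1
        omega
      rw [hnat2]; push_cast; ring
    have hAn2 : ((a:ℝ)/n)^p * (((n-1).choose p:ℕ):ℝ) ≤
        ((a.choose p:ℕ):ℝ) + ((s:ℝ)-1)/2 * ((a.choose (p-1):ℕ):ℝ) := by
      rw [← mul_le_mul_iff_of_pos_right hfact0]
      calc ((a:ℝ)/n)^p * (((n-1).choose p:ℕ):ℝ) * ((p.factorial:ℕ):ℝ)
          = ((a:ℝ)/n)^p * ((((n-1).choose p:ℕ):ℝ) * ((p.factorial:ℕ):ℝ)) := by ring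
        _ = ((a:ℝ)/n)^p * ∏ j ∈ range p, ((n:ℝ)-1-j) := by rw [hcn1]
        _ ≤ ∏ j ∈ range p, ((a:ℝ)-j) + ((s:ℝ)-1)/2 * p * ∏ j ∈ range (p-1), ((a:ℝ)-j) := hAn
        _ = (((a.choose p:ℕ):ℝ) + ((s:ℝ)-1)/2 * ((a.choose (p-1):ℕ):ℝ)) * ((p.factorial:ℕ):ℝ) := by
            rw [← hca, ← hca1, hfacsplit]; ring
    have hsum : s * a.choose p + s.choose 2 * a.choose (p-1) ≤
        ∑ i ∈ Icc 1 (min p s), s.choose i * (a.choose (h-i)) := by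
      have hsub : ({1,2} : Finset ℕ) ⊆ Icc 1 (min p s) := by
        intro x hx
        simp only [Finset.mem_insert, Finset.mem_singleton] at hx
        simp only [Finset.mem_Icc, le_min_iff]
        omega
      have hle := Finset.sum_le_sum_of_subset hsub
        (f := fun i => s.choose i * (a.choose (h-i)))
      rw [Finset.sum_pair (by norm_num : (1:ℕ) ≠ 2)] at hle
      simp only [Nat.choose_one_right] at hle
      exact hle
    have hnat : 2*(s * a.choose p + s.choose 2 * a.choose (p-1)) ≤
        2 * ∑ i ∈ Icc 1 (min p s), s.choose i * (a.choose (h-i)) :=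
      Nat.mul_le_mul_left 2 hsum
    have hreal : ((2*(s * a.choose p + s.choose 2 * a.choose (p-1)):ℕ):ℝ) ≤
        ((2 * ∑ i ∈ Icc 1 (min p s), s.choose i * (a.choose (h-i)):ℕ):ℝ) := by
      exact_mod_cast hnat
    have hchoose2 : ((s.choose 2:ℕ):ℝ) = (s:ℝ)*((s:ℝ)-1)/2 := Nat.cast_choose_two ℝ s
    have hstep : 2*(s:ℝ)*((a:ℝ)/n)^p*(((n-1).choose p:ℕ):ℝ) ≤
        ((2*(s * a.choose p + s.choose 2 * a.choose (p-1)):ℕ):ℝ) := by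
      push_cast [hchoose2]
      have hs0 : (0:ℝ) ≤ 2*(s:ℝ) := by positivity
      nlinarith [mul_le_mul_of_nonneg_left hAn2 hs0]
    linarith [hstep, hreal]
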